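/- Let x₀, y₀ be positive integers and let L be an integer with T ≤ L ≤ (x₀+1)·(y₀+1), where T = #{(x,y) ∈ ℤ² : x ≥ 0, y ≥ 0, y₀·x + x₀·y ≤ x₀·y₀}. Then there exists a finite set S of pairs of nonnegative integers such that: (a) S is downward closed, i.e. if (x,y) ∈ S and 0 ≤ x' ≤ x, 0 ≤ y' ≤ y then (x',y') ∈ S; (b) S is lattice-convex, i.e. every integer point of the convex hull of S in ℝ² lies in S; (c) (x₀,0) ∈ S, (0,y₀) ∈ S, and S ⊆ [0,x₀] × [0,y₀]; and (d) the cardinality of S equals L. -/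

import Mathlib

namespace GenAux

def fval (x₀ y₀ : ℤ) (p : ℤ × ℤ) : ℤ := p.1 + (x₀ + 1) * (y₀ * p.1 + x₀ * p.2)

noncomputable def Sc (x₀ y₀ c : ℤ) : Finset (ℤ × ℤ) :=
  (Finset.Icc 0 x₀ ×ˢ Finset.Icc 0 y₀).filter (fun p => fval x₀ y₀ p ≤ c)

lemma mem_Sc {x₀ y₀ c : ℤ} {p : ℤ × ℤ} :
    p ∈ Sc x₀ y₀ c ↔ 0 ≤ p.1 ∧ p.1 ≤ x₀ ∧ 0 ≤ p.2 ∧ p.2 ≤ y₀ ∧ fval x₀ y₀ p ≤ c := by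
  simp [Sc, Finset.mem_filter, Finset.mem_product, Finset.mem_Icc, and_assoc]

lemma fval_inj {x₀ y₀ : ℤ} (hx : 0 < x₀) {p q : ℤ × ℤ}
    (hp1 : 0 ≤ p.1) (hp2 : p.1 ≤ x₀) (hq1 : 0 ≤ q.1) (hq2 : q.1 ≤ x₀)
    (h : fval x₀ y₀ p = fval x₀ y₀ q) : p = q := by
  have hmod : p.1 % (x₀ + 1) = q.1 % (x₀ + 1) := by
    have := congrArg (· % (x₀ + 1)) h
    simpa [fval, Int.add_mul_emod_self_left] using this
  rw [Int.emod_eq_of_lt hp1 (by omega), Int.emod_eq_of_lt hq1 (by omega)] at hmod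
  have hy2 : p.2 = q.2 := by
    have h2 : (x₀ + 1) * (x₀ * p.2) = (x₀ + 1) * (x₀ * q.2) := by
      simp only [fval, hmod] at h; ring_nf at h ⊢; nlinarith [h]
    have := mul_left_cancel₀ (by omega : (x₀ + 1 : ℤ) ≠ 0) h2
    exact mul_left_cancel₀ (by omega : (x₀ : ℤ) ≠ 0) this
  exact Prod.ext hmod hy2

lemma Sc_mono {x₀ y₀ c c' : ℤ} (h : c ≤ c') : Sc x₀ y₀ c ⊆ Sc x₀ y₀ c' := by
  intro p hp; rw [mem_Sc] at hp ⊢; exact ⟨hp.1, hp.2.1, hp.2.2.1, hp.2.2.2.1, hp.2.2.2.2.trans h⟩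

lemma card_step {x₀ y₀ : ℤ} (hx : 0 < x₀) (c : ℤ) :
    (Sc x₀ y₀ (c + 1)).card ≤ (Sc x₀ y₀ c).card + 1 := by
  have hsub : Sc x₀ y₀ c ⊆ Sc x₀ y₀ (c + 1) := Sc_mono (by omega)
  have hkey := Finset.card_sdiff_add_card_eq_card hsub
  have hone : (Sc x₀ y₀ (c + 1) \ Sc x₀ y₀ c).card ≤ 1 := by
    rw [Finset.card_le_one]
    intro a ha b hb
    rw [Finset.mem_sdiff, mem_Sc, mem_Sc] at ha hb
    refine fval_inj (y₀ := y₀) hx ha.1.1 ha.1.2.1 hb.1.1 hb.1.2.1 ?_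
    have ha' : ¬ fval x₀ y₀ a ≤ c := fun hc => ha.2 ⟨ha.1.1, ha.1.2.1, ha.1.2.2.1, ha.1.2.2.2.1, hc⟩
    have hb' : ¬ fval x₀ y₀ b ≤ c := fun hc => hb.2 ⟨hb.1.1, hb.1.2.1, hb.1.2.2.1, hb.1.2.2.2.1, hc⟩
    omega
  omega

lemma ivt (g : ℤ → ℤ) (hstep : ∀ c, g (c + 1) ≤ g c + 1) (_hmono : ∀ c, g c ≤ g (c + 1))
    (c₀ L : ℤ) (h0 : g c₀ ≤ L) :
    ∀ c₁, c₀ ≤ c₁ → L ≤ g c₁ → ∃ c, c₀ ≤ c ∧ g c = L := by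
  have key : ∀ n : ℕ, L ≤ g (c₀ + n) → ∃ c, c₀ ≤ c ∧ g c = L := by
    intro n
    induction n with
    | zero => intro h; exact ⟨c₀, le_refl _, le_antisymm h0 (by simpa using h)⟩
    | succ m ih =>
      intro h
      by_cases hc : L ≤ g (c₀ + m)
      · exact ih hc
      · refine ⟨c₀ + m + 1, by omega, ?_⟩
        have h1 := hstep (c₀ + m)
        have h2 : (c₀ : ℤ) + (m + 1 : ℕ) = c₀ + m + 1 := by push_cast; ring
        rw [h2] at h
        omega
  intro c₁ hc₁ h
  obtain ⟨n, hn⟩ := Int.le.dest hc₁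
  exact key n (by rw [hn]; exact h)

end GenAux


/-- Every lattice count `L` between the triangle count `T` and the rectangle count
`(x₀+1)(y₀+1)` is realized by a downward-closed lattice-convex set of nonnegative lattice
points containing `(x₀,0)` and `(0,y₀)` inside the rectangle `[0,x₀] × [0,y₀]` (i.e. by
the lattice-point set of a purely elliptic convex generator with the given intercepts). -/
theorem exists_generator_with_count (x₀ y₀ : ℤ) (hx : 0 < x₀) (hy : 0 < y₀) (L : ℤ)
    (hT : ({p : ℤ × ℤ | 0 ≤ p.1 ∧ 0 ≤ p.2 ∧ y₀ * p.1 + x₀ * p.2 ≤ x₀ * y₀}.ncard : ℤ) ≤ L)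
    (hL : L ≤ (x₀ + 1) * (y₀ + 1)) :
    ∃ S : Finset (ℤ × ℤ),
      (∀ p ∈ S, 0 ≤ p.1 ∧ 0 ≤ p.2) ∧
      (∀ p ∈ S, ∀ q : ℤ × ℤ, 0 ≤ q.1 → q.1 ≤ p.1 → 0 ≤ q.2 → q.2 ≤ p.2 → q ∈ S) ∧
      (∀ q : ℤ × ℤ,
        ((q.1 : ℝ), (q.2 : ℝ)) ∈
          convexHull ℝ ((fun p : ℤ × ℤ => ((p.1 : ℝ), (p.2 : ℝ))) '' (S : Set (ℤ × ℤ))) →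
        q ∈ S) ∧
      ((x₀, 0) ∈ S ∧ (0, y₀) ∈ S ∧ ∀ p ∈ S, p.1 ≤ x₀ ∧ p.2 ≤ y₀) ∧
      (S.card : ℤ) = L := by
  set c₀ : ℤ := x₀ + (x₀ + 1) * (x₀ * y₀) with hc₀def
  set c₁ : ℤ := x₀ + (x₀ + 1) * (y₀ * x₀ + x₀ * y₀) with hc₁def
  -- triangle set is `Sc c₀`
  have hset : {p : ℤ × ℤ | 0 ≤ p.1 ∧ 0 ≤ p.2 ∧ y₀ * p.1 + x₀ * p.2 ≤ x₀ * y₀}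
      = ↑(GenAux.Sc x₀ y₀ c₀) := by
    ext p
    simp only [Set.mem_setOf_eq, Finset.mem_coe, GenAux.mem_Sc]
    constructor
    · rintro ⟨h1, h2, h3⟩
      have hxb : p.1 ≤ x₀ := by nlinarith [mul_nonneg hx.le h2]
      have hyb : p.2 ≤ y₀ := by nlinarith [mul_nonneg hy.le h1]
      refine ⟨h1, hxb, h2, hyb, ?_⟩
      simp only [GenAux.fval]
      nlinarith [mul_nonneg (by linarith : (0:ℤ) ≤ x₀ + 1)
        (by linarith : (0:ℤ) ≤ x₀ * y₀ - (y₀ * p.1 + x₀ * p.2))]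
    · rintro ⟨h1, h2, h3, h4, h5⟩
      refine ⟨h1, h3, ?_⟩
      simp only [GenAux.fval] at h5
      by_contra hcon
      push_neg at hcon
      nlinarith [mul_nonneg (by linarith : (0:ℤ) ≤ x₀ + 1)
        (by linarith : (0:ℤ) ≤ (y₀ * p.1 + x₀ * p.2) - x₀ * y₀ - 1)]
  have hT' : ((GenAux.Sc x₀ y₀ c₀).card : ℤ) ≤ L := by
    rw [hset, Set.ncard_coe_finset] at hT; exact hT
  -- `Sc c₁` is the full rectangle
  have hfull : GenAux.Sc x₀ y₀ c₁ = Finset.Icc 0 x₀ ×ˢ Finset.Icc 0 y₀ := by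
    ext p
    rw [GenAux.mem_Sc, Finset.mem_product, Finset.mem_Icc, Finset.mem_Icc]
    constructor
    · rintro ⟨h1, h2, h3, h4, _⟩; exact ⟨⟨h1, h2⟩, ⟨h3, h4⟩⟩
    · rintro ⟨⟨h1, h2⟩, ⟨h3, h4⟩⟩
      refine ⟨h1, h2, h3, h4, ?_⟩
      simp only [GenAux.fval]
      nlinarith [mul_nonneg (by linarith : (0:ℤ) ≤ x₀ + 1)
        (by nlinarith [mul_nonneg hy.le (by linarith : (0:ℤ) ≤ x₀ - p.1),
          mul_nonneg hx.le (by linarith : (0:ℤ) ≤ y₀ - p.2)] :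
          (0:ℤ) ≤ (y₀ * x₀ + x₀ * y₀) - (y₀ * p.1 + x₀ * p.2))]
  have hrect : ((GenAux.Sc x₀ y₀ c₁).card : ℤ) = (x₀ + 1) * (y₀ + 1) := by
    rw [hfull, Finset.card_product, Int.card_Icc, Int.card_Icc]
    push_cast [Int.toNat_of_nonneg (by linarith : (0:ℤ) ≤ x₀ + 1 - 0),
      Int.toNat_of_nonneg (by linarith : (0:ℤ) ≤ y₀ + 1 - 0)]
    ring
  have hc₀₁ : c₀ ≤ c₁ := by
    nlinarith [mul_nonneg (by linarith : (0:ℤ) ≤ x₀ + 1) (mul_nonneg hy.le hx.le)]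
  -- intermediate value
  obtain ⟨c, hcge, hc⟩ := GenAux.ivt (fun c => ((GenAux.Sc x₀ y₀ c).card : ℤ))
    (fun c => by
      show ((GenAux.Sc x₀ y₀ (c + 1)).card : ℤ) ≤ ((GenAux.Sc x₀ y₀ c).card : ℤ) + 1
      exact_mod_cast GenAux.card_step (y₀ := y₀) hx c)
    (fun c => by
      show ((GenAux.Sc x₀ y₀ c).card : ℤ) ≤ ((GenAux.Sc x₀ y₀ (c + 1)).card : ℤ)
      exact_mod_cast Finset.card_le_card (GenAux.Sc_mono (x₀ := x₀) (y₀ := y₀) (by omega)))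
    c₀ L hT' c₁ hc₀₁ (by
      show L ≤ ((GenAux.Sc x₀ y₀ c₁).card : ℤ)
      rw [hrect]; exact hL)
  refine ⟨GenAux.Sc x₀ y₀ c, ?_, ?_, ?_, ⟨?_, ?_, ?_⟩, hc⟩
  · intro p hp; rw [GenAux.mem_Sc] at hp; exact ⟨hp.1, hp.2.2.1⟩
  · intro p hp q hq1 hq2 hq3 hq4
    rw [GenAux.mem_Sc] at hp ⊢
    obtain ⟨h1, h2, h3, h4, h5⟩ := hp
    refine ⟨hq1, le_trans hq2 h2, hq3, le_trans hq4 h4, ?_⟩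
    have hA : y₀ * q.1 ≤ y₀ * p.1 := mul_le_mul_of_nonneg_left hq2 hy.le
    have hB : x₀ * q.2 ≤ x₀ * p.2 := mul_le_mul_of_nonneg_left hq4 hx.le
    have hC : (x₀ + 1) * (y₀ * q.1 + x₀ * q.2) ≤ (x₀ + 1) * (y₀ * p.1 + x₀ * p.2) :=
      mul_le_mul_of_nonneg_left (by linarith) (by linarith)
    simp only [GenAux.fval] at h5 ⊢
    linarith
  · -- lattice convexity
    intro q hq
    set C : Set (ℝ × ℝ) := {v : ℝ × ℝ | 0 ≤ v.1 ∧ v.1 ≤ (x₀ : ℝ) ∧ 0 ≤ v.2 ∧ v.2 ≤ (y₀ : ℝ) ∧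
      v.1 + ((x₀ : ℝ) + 1) * ((y₀ : ℝ) * v.1 + (x₀ : ℝ) * v.2) ≤ (c : ℝ)} with hCdef
    have hCconv : Convex ℝ C := by
      intro v hv w hw a b ha hb hab
      obtain ⟨h1, h2, h3, h4, h5⟩ := hv
      obtain ⟨g1, g2, g3, g4, g5⟩ := hw
      simp only [hCdef, Set.mem_setOf_eq, Prod.fst_add, Prod.snd_add, Prod.smul_fst,
        Prod.smul_snd, smul_eq_mul]
      refine ⟨?_, ?_, ?_, ?_, ?_⟩
      · nlinarith [mul_nonneg ha h1, mul_nonneg hb g1]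
      · nlinarith [mul_le_mul_of_nonneg_left h2 ha, mul_le_mul_of_nonneg_left g2 hb]
      · nlinarith [mul_nonneg ha h3, mul_nonneg hb g3]
      · nlinarith [mul_le_mul_of_nonneg_left h4 ha, mul_le_mul_of_nonneg_left g4 hb]
      · have hc' : a * (c : ℝ) + b * c = c := by rw [← add_mul, hab, one_mul]
        linarith [mul_le_mul_of_nonneg_left h5 ha, mul_le_mul_of_nonneg_left g5 hb]
    have hsub : (fun p : ℤ × ℤ => ((p.1 : ℝ), (p.2 : ℝ))) '' ↑(GenAux.Sc x₀ y₀ c) ⊆ C := by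
      rintro _ ⟨p, hp, rfl⟩
      rw [Finset.mem_coe, GenAux.mem_Sc] at hp
      obtain ⟨h1, h2, h3, h4, h5⟩ := hp
      simp only [GenAux.fval] at h5
      simp only [hCdef, Set.mem_setOf_eq]
      refine ⟨by exact_mod_cast h1, by exact_mod_cast h2, by exact_mod_cast h3,
        by exact_mod_cast h4, by exact_mod_cast h5⟩
    have hmem : (((q.1 : ℝ), (q.2 : ℝ)) : ℝ × ℝ) ∈ C := convexHull_min hsub hCconv hq
    simp only [hCdef, Set.mem_setOf_eq] at hmem
    obtain ⟨m1, m2, m3, m4, m5⟩ := hmem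
    rw [GenAux.mem_Sc]
    refine ⟨by exact_mod_cast m1, by exact_mod_cast m2, by exact_mod_cast m3,
      by exact_mod_cast m4, ?_⟩
    simp only [GenAux.fval]
    exact_mod_cast m5
  · rw [GenAux.mem_Sc]
    refine ⟨hx.le, le_refl _, le_refl _, hy.le, ?_⟩
    simp only [GenAux.fval]
    have : x₀ + (x₀ + 1) * (y₀ * x₀ + x₀ * 0) = c₀ := by rw [hc₀def]; ring
    omega
  · rw [GenAux.mem_Sc]
    refine ⟨le_refl _, hx.le, hy.le, le_refl _, ?_⟩
    simp only [GenAux.fval]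
    have : (0 : ℤ) + (x₀ + 1) * (y₀ * 0 + x₀ * y₀) = (x₀ + 1) * (x₀ * y₀) := by ring
    omega
  · intro p hp; rw [GenAux.mem_Sc] at hp; exact ⟨hp.2.1, hp.2.2.2.1⟩
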